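/- Kummer-style corollary of Voronoi's work: for an even integer n and a prime p with (p−1) ∤ n and p ∤ n, the p-adic valuation of B_n/n is nonnegative, i.e., p does not divide the denominator of B_n/n. -/

import Mathlib

open Finset

theorem aux_three_pow (w : ℕ) (hw : 1 ≤ w) : w + 2 ≤ 3 ^ w := by
  induction w with
  | zero => omega
  | succ v ih =>
    rcases Nat.eq_zero_or_pos v with rfl | hv
    · norm_num
    · have := ih hv
      have h1 : (1:ℕ) ≤ 3 ^ v := Nat.one_le_pow _ _ (by norm_num)
      have : 3 ^ (v+1) = 3 * 3 ^ v := by ring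
      omega

theorem aux_val_le (p j : ℕ) (hp : 3 ≤ p) (hj : 2 ≤ j) : padicValNat p j + 2 ≤ j := by
  rcases Nat.eq_zero_or_pos (padicValNat p j) with h0 | h1
  · omega
  · have hle : p ^ padicValNat p j ≤ j :=
      Nat.le_of_dvd (by omega) pow_padicValNat_dvd
    have h3 : 3 ^ padicValNat p j ≤ p ^ padicValNat p j := Nat.pow_le_pow_left hp _
    have := aux_three_pow _ h1
    omega

theorem aux_norm_pj (p j : ℕ) (hp : p.Prime) (h3 : 3 ≤ p) (hj : 2 ≤ j) :
    padicNorm p ((p : ℚ) ^ j / (j : ℚ)) ≤ (p : ℚ) ^ (-2 : ℤ) := by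
  haveI : Fact p.Prime := ⟨hp⟩
  have hp1 : (1:ℚ) < p := by exact_mod_cast hp.one_lt
  have hp0 : (p : ℚ) ≠ 0 := by positivity
  have hj0 : (j : ℚ) ≠ 0 := by exact_mod_cast (by omega : j ≠ 0)
  have hq0 : (p : ℚ) ^ j / (j : ℚ) ≠ 0 := by positivity
  rw [padicNorm.eq_zpow_of_nonzero hq0]
  have hval : padicValRat p ((p : ℚ) ^ j / (j : ℚ)) = (j : ℤ) - padicValNat p j := by
    rw [padicValRat.div (by positivity) hj0]
    rw [show ((p:ℚ)^j) = ((p:ℚ))^j from rfl, padicValRat.pow (p:ℚ),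
      padicValRat.self hp.one_lt, padicValRat.of_nat]
    push_cast; ring
  rw [hval]
  have hv := aux_val_le p j h3 hj
  apply zpow_le_zpow_right₀ hp1.le
  omega

theorem aux_main (p : ℕ) (hp : p.Prime) (h3 : 3 ≤ p) : ∀ n : ℕ,
    padicNorm p ((p : ℚ) * bernoulli n - ∑ k ∈ range p, (k : ℚ) ^ n) ≤ (p : ℚ)⁻¹ := by
  haveI : Fact p.Prime := ⟨hp⟩
  intro n
  induction n using Nat.strong_induction_on with
  | _ n ih =>
  have hp1 : (1:ℚ) < p := by exact_mod_cast hp.one_lt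
  have hp0 : (p : ℚ) ≠ 0 := by positivity
  have hpinv : (0:ℚ) ≤ (p:ℚ)⁻¹ := by positivity
  have hbern : ∀ i < n, padicNorm p (bernoulli i) ≤ (p : ℚ) := by
    intro i hi
    have h1 := ih i hi
    have h2 : padicNorm p ((∑ k ∈ range p, (k : ℚ) ^ i)) ≤ 1 := by
      have : (∑ k ∈ range p, (k : ℚ) ^ i) = ((∑ k ∈ range p, k ^ i : ℕ) : ℚ) := by push_cast; ring
      rw [this]; exact padicNorm.of_nat _
    have h4 : padicNorm p ((p:ℚ) * bernoulli i) ≤ 1 := by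
      have heq : (p:ℚ) * bernoulli i =
          ((p : ℚ) * bernoulli i - ∑ k ∈ range p, (k : ℚ) ^ i) + ∑ k ∈ range p, (k : ℚ) ^ i := by
        ring
      rw [heq]
      refine le_trans padicNorm.nonarchimedean (max_le (h1.trans ?_) h2)
      rw [inv_le_one_iff₀]; right; exact hp1.le
    have h5 : padicNorm p ((p:ℚ) * bernoulli i)
        = (p:ℚ)⁻¹ * padicNorm p (bernoulli i) := by
      rw [padicNorm.mul, padicNorm.padicNorm_p_of_prime]
    rw [h5] at h4
    calc padicNorm p (bernoulli i) = (p:ℚ) * ((p:ℚ)⁻¹ * padicNorm p (bernoulli i)) := by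
          field_simp
    _ ≤ (p:ℚ) * 1 := mul_le_mul_of_nonneg_left h4 (by positivity)
    _ = (p:ℚ) := by ring
  have hF := sum_range_pow p n
  rw [Finset.sum_range_succ, Nat.choose_succ_self_right] at hF
  have hlast : (bernoulli n) * ((n+1 : ℕ) : ℚ) * (p:ℚ) ^ (n+1-n) / ((n:ℚ)+1)
      = (p:ℚ) * bernoulli n := by
    have hne : ((n:ℚ)+1) ≠ 0 := by positivity
    push_cast
    field_simp
    ring_nf
    rw [Nat.add_sub_cancel, pow_one]
  rw [hlast] at hF
  have key : (p : ℚ) * bernoulli n - ∑ k ∈ range p, (k : ℚ) ^ n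
      = -∑ i ∈ range n, bernoulli i * ((n+1).choose i : ℚ) * (p:ℚ) ^ (n+1-i) / ((n:ℚ)+1) := by
    rw [hF]; ring
  rw [key, padicNorm.neg]
  apply padicNorm.sum_le' _ hpinv
  intro i hi
  rw [Finset.mem_range] at hi
  -- rewrite the term
  have hnat : (n+1) * n.choose i = (n+1).choose i * (n+1-i) := by
    have h := Nat.add_one_mul_choose_eq n (n - i)
    rw [Nat.choose_symm hi.le] at h
    rw [show n - i + 1 = n + 1 - i by omega] at h
    rw [Nat.choose_symm (show i ≤ n + 1 by omega)] at h
    linarith [h]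
  have hne : ((n:ℚ)+1) ≠ 0 := by positivity
  have hne2 : ((n+1-i : ℕ) : ℚ) ≠ 0 := by
    exact_mod_cast (by omega : (n+1-i : ℕ) ≠ 0)
  have hdivq : (((n+1).choose i : ℕ) : ℚ) / ((n:ℚ)+1)
      = ((n.choose i : ℕ) : ℚ) / ((n+1-i : ℕ) : ℚ) := by
    rw [div_eq_div_iff hne hne2]
    have : (((n+1).choose i : ℕ) : ℚ) * ((n+1-i : ℕ) : ℚ) = ((n:ℚ)+1) * ((n.choose i : ℕ) : ℚ) := by
      exact_mod_cast congrArg (Nat.cast : ℕ → ℚ) hnat.symm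
    linarith [this]
  have hterm : bernoulli i * ((n+1).choose i : ℚ) * (p:ℚ) ^ (n+1-i) / ((n:ℚ)+1)
      = bernoulli i * (n.choose i : ℚ) * ((p:ℚ) ^ (n+1-i) / ((n+1-i : ℕ) : ℚ)) := by
    calc bernoulli i * ((n+1).choose i : ℚ) * (p:ℚ) ^ (n+1-i) / ((n:ℚ)+1)
        = bernoulli i * (p:ℚ) ^ (n+1-i) * ((((n+1).choose i : ℕ) : ℚ) / ((n:ℚ)+1)) := by ring
    _ = bernoulli i * (p:ℚ) ^ (n+1-i) * (((n.choose i : ℕ) : ℚ) / ((n+1-i : ℕ) : ℚ)) := by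
        rw [hdivq]
    _ = bernoulli i * (n.choose i : ℚ) * ((p:ℚ) ^ (n+1-i) / ((n+1-i : ℕ) : ℚ)) := by ring
  rw [hterm, padicNorm.mul, padicNorm.mul]
  have b1 := hbern i hi
  have b2 : padicNorm p ((n.choose i : ℚ)) ≤ 1 := padicNorm.of_nat _
  have b3 : padicNorm p ((p:ℚ) ^ (n+1-i) / ((n+1-i : ℕ) : ℚ)) ≤ (p : ℚ) ^ (-2 : ℤ) :=
    aux_norm_pj p (n+1-i) hp h3 (by omega)
  calc padicNorm p (bernoulli i) * padicNorm p ((n.choose i : ℚ))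
        * padicNorm p ((p:ℚ) ^ (n+1-i) / ((n+1-i : ℕ) : ℚ))
      ≤ (p:ℚ) * 1 * (p:ℚ) ^ (-2 : ℤ) := by
        gcongr <;> first | exact padicNorm.nonneg _ | positivity
  _ = (p:ℚ)⁻¹ := by
        rw [mul_one, zpow_neg, zpow_two, mul_inv]
        rw [← mul_assoc, mul_inv_cancel₀ hp0, one_mul]

theorem aux_dvd_sum (p n : ℕ) (hp : p.Prime) (hn : n ≠ 0) (h1 : ¬ (p - 1) ∣ n) :
    p ∣ ∑ k ∈ range p, k ^ n := by
  haveI : Fact p.Prime := ⟨hp⟩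
  rw [← ZMod.natCast_eq_zero_iff]
  push_cast
  have hbij : ∑ k ∈ range p, (k : ZMod p) ^ n = ∑ x : ZMod p, x ^ n := by
    refine Finset.sum_bij' (fun k _ => ((k : ZMod p))) (fun (x : ZMod p) _ => x.val)
      (fun _ _ => mem_univ _) (fun x _ => mem_range.2 (ZMod.val_lt x)) ?_ ?_ ?_ <;>
      simp +contextual [ZMod.val_cast_of_lt, ZMod.natCast_zmod_val, Finset.mem_range, Nat.mod_eq_of_lt]
  rw [hbij]
  classical
  have key := FiniteField.sum_pow_units (ZMod p) n
  rw [ZMod.card p, if_neg h1] at key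
  have h0 : ∑ x : ZMod p, x ^ n = ∑ x : (ZMod p)ˣ, (x : ZMod p) ^ n := by
    let φ : (ZMod p)ˣ ↪ ZMod p := ⟨fun x ↦ x, fun _ _ h => Units.ext h⟩
    have huniv : univ.map φ = univ \ {0} := by
      ext x
      simp only [mem_map, mem_univ, Function.Embedding.coeFn_mk, true_and, mem_sdiff,
        mem_singleton, φ]; exact isUnit_iff_ne_zero
    calc
      ∑ x : ZMod p, x ^ n = ∑ x ∈ univ \ {(0 : ZMod p)}, x ^ n := by
        rw [← sum_sdiff ({0} : Finset (ZMod p)).subset_univ, sum_singleton, zero_pow hn, add_zero]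
      _ = ∑ x : (ZMod p)ˣ, (x : ZMod p) ^ n := by simp [φ, ← huniv, univ.sum_map φ]; rfl
  rw [h0, key]

/-- Kummer-style corollary: for even `n` and a prime `p` with `(p-1) ∤ n` and `p ∤ n`,
the `p`-adic valuation of `B_n / n` is nonnegative. -/
theorem voronoi_kummer (n p : ℕ) (hne : Even n) (hp : p.Prime)
    (h1 : ¬ (p - 1) ∣ n) (h2 : ¬ p ∣ n) :
    0 ≤ padicValRat p (bernoulli n / n) := by
  haveI : Fact p.Prime := ⟨hp⟩
  have hn0 : n ≠ 0 := by rintro rfl; exact h2 (dvd_zero p)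
  have hp2 : p ≠ 2 := by rintro rfl; exact h1 (by simpa using dvd_refl 1 |>.trans (one_dvd n))
  have h3 : 3 ≤ p := by
    have := hp.two_le; omega
  by_cases hb : bernoulli n = 0
  · simp [hb]
  have hp1 : (1:ℚ) < p := by exact_mod_cast hp.one_lt
  have hp0 : (p : ℚ) ≠ 0 := by positivity
  -- S is divisible by p
  have hdvd := aux_dvd_sum p n hp hn0 h1
  have hSnorm : padicNorm p ((∑ k ∈ range p, (k : ℚ) ^ n)) ≤ (p:ℚ)⁻¹ := by
    have hcast : (∑ k ∈ range p, (k : ℚ) ^ n) = (((∑ k ∈ range p, k ^ n : ℕ) : ℤ) : ℚ) := by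
      push_cast; ring
    rw [hcast]
    have := (padicNorm.dvd_iff_norm_le (p := p) (n := 1)
      (z := ((∑ k ∈ range p, k ^ n : ℕ) : ℤ))).mp (by rw [pow_one]; exact_mod_cast hdvd)
    simpa using this
  have hmain := aux_main p hp h3 n
  have hpB : padicNorm p ((p:ℚ) * bernoulli n) ≤ (p:ℚ)⁻¹ := by
    have heq : (p:ℚ) * bernoulli n =
        ((p : ℚ) * bernoulli n - ∑ k ∈ range p, (k : ℚ) ^ n) + ∑ k ∈ range p, (k : ℚ) ^ n := by
      ring
    rw [heq]
    exact le_trans padicNorm.nonarchimedean (max_le hmain hSnorm)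
  have hBle : padicNorm p (bernoulli n) ≤ 1 := by
    rw [padicNorm.mul, padicNorm.padicNorm_p_of_prime] at hpB
    calc padicNorm p (bernoulli n)
        = (p:ℚ) * ((p:ℚ)⁻¹ * padicNorm p (bernoulli n)) := by field_simp
    _ ≤ (p:ℚ) * (p:ℚ)⁻¹ := mul_le_mul_of_nonneg_left hpB (by positivity)
    _ = 1 := by field_simp
  have hvB : 0 ≤ padicValRat p (bernoulli n) := by
    rw [padicNorm.eq_zpow_of_nonzero hb] at hBle
    have h10 : (p:ℚ) ^ (0:ℤ) = 1 := zpow_zero _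
    rw [← h10] at hBle
    have := (zpow_le_zpow_iff_right₀ hp1).mp hBle
    omega
  have hnq : ((n : ℚ)) ≠ 0 := by exact_mod_cast hn0
  rw [padicValRat.div hb hnq, padicValRat.of_nat,
    padicValNat.eq_zero_of_not_dvd h2]
  simpa using hvB
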